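/- Define l : ℤ → ℝ by l(0) = 0 and l(n) = |n| + (1/2)^|n| for n ≠ 0. There do not exist finitely many positive real numbers α₁, …, α_k such that every value l(n), n ∈ ℤ, lies in the additive submonoid of ℝ generated by α₁, …, α_k. -/

import Mathlib

private lemma aux_den (D : ℕ) (q : ℚ) (h : q.den ∣ D) : ∃ m : ℤ, (D : ℚ) * q = m := by
  obtain ⟨e, he⟩ := h
  refine ⟨q.num * e, ?_⟩
  have h0 : (q.den : ℚ) ≠ 0 := by exact_mod_cast q.den_nz
  conv_lhs => rw [← Rat.num_div_den q, he]
  push_cast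
  field_simp

theorem stmt_6 :
    let l : ℤ → ℝ := fun n => if n = 0 then 0 else (|n| : ℝ) + (1 / 2) ^ n.natAbs
    ¬ ∃ (k : ℕ) (α : Fin k → ℝ), (∀ i, 0 < α i) ∧
      ∀ n : ℤ, ∃ c : Fin k → ℕ, l n = ∑ i, (c i : ℝ) * α i := by
  intro l
  rintro ⟨k, α, hpos, hrep⟩
  choose c hc using hrep
  -- the subgroup of integer vectors whose α-combination is rational
  set S : Submodule ℤ (Fin k → ℤ) :=
    { carrier := {v | ∃ q : ℚ, (q : ℝ) = ∑ i, (v i : ℝ) * α i}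
      zero_mem' := ⟨0, by simp⟩
      add_mem' := by
        rintro v w ⟨q1, h1⟩ ⟨q2, h2⟩
        refine ⟨q1 + q2, ?_⟩
        push_cast [h1, h2]
        rw [← Finset.sum_add_distrib]
        exact Finset.sum_congr rfl fun i _ => by push_cast [Pi.add_apply]; ring
      smul_mem' := by
        rintro z v ⟨q, h⟩
        refine ⟨z * q, ?_⟩
        push_cast [h]
        rw [Finset.mul_sum]
        exact Finset.sum_congr rfl fun i _ => by
          push_cast [Pi.smul_apply, smul_eq_mul]; ring } with hSdef
  obtain ⟨F, hF⟩ := IsNoetherian.noetherian S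
  have hFmem : ∀ f ∈ F, ∃ q : ℚ, (q : ℝ) = ∑ i, (f i : ℝ) * α i := by
    intro f hf
    have : (f : Fin k → ℤ) ∈ S := hF ▸ Submodule.subset_span hf
    exact this
  choose! g hg using hFmem
  set D : ℕ := ∏ f ∈ F, (g f).den with hD
  have hD0 : 0 < D := Finset.prod_pos fun f _ => (g f).pos
  have key : ∀ v ∈ S, ∃ q : ℚ, (q : ℝ) = ∑ i, (v i : ℝ) * α i ∧ ∃ m : ℤ, (D : ℚ) * q = m := by
    intro v hv
    rw [← hF] at hv
    induction hv using Submodule.span_induction with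
    | mem f hf =>
        exact ⟨g f, hg f hf, aux_den D _ (Finset.dvd_prod_of_mem _ hf)⟩
    | zero => exact ⟨0, by simp, 0, by simp⟩
    | add x y hx hy ihx ihy =>
        obtain ⟨q1, e1, m1, hm1⟩ := ihx
        obtain ⟨q2, e2, m2, hm2⟩ := ihy
        refine ⟨q1 + q2, ?_, m1 + m2, by push_cast; linear_combination hm1 + hm2⟩
        push_cast [e1, e2]
        rw [← Finset.sum_add_distrib]
        exact Finset.sum_congr rfl fun i _ => by push_cast [Pi.add_apply]; ring
    | smul z x hx ih =>
        obtain ⟨q, e, m, hm⟩ := ih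
        refine ⟨z * q, ?_, z * m, by push_cast; linear_combination (z : ℚ) * hm⟩
        push_cast [e]
        rw [Finset.mul_sum]
        exact Finset.sum_congr rfl fun i _ => by
          push_cast [Pi.smul_apply, smul_eq_mul]; ring
  -- evaluate l at positive integers
  have hl : ∀ z : ℤ, 0 < z → l z = (z : ℝ) + (1 / 2) ^ z.natAbs := by
    intro z hz
    simp only [l]
    rw [if_neg (by omega), abs_of_pos (show (0:ℝ) < (z:ℝ) by exact_mod_cast hz)]
  -- the key sums
  have hsum : ∀ n : ℕ,
      ∑ i, (((c ((n : ℤ) + 2) i : ℤ) - c ((n : ℤ) + 1) i - c 2 i + c 1 i : ℤ) : ℝ) * α i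
        = ((1 / 4 - (1 / 2 : ℚ) ^ (n + 2) : ℚ) : ℝ) := by
    intro n
    push_cast
    simp only [sub_mul, add_mul, Finset.sum_sub_distrib, Finset.sum_add_distrib]
    rw [← hc ((n : ℤ) + 2), ← hc ((n : ℤ) + 1), ← hc 2, ← hc 1]
    rw [hl ((n : ℤ) + 2) (by omega), hl ((n : ℤ) + 1) (by omega),
      hl 2 (by norm_num), hl 1 (by norm_num)]
    have h2 : ((n : ℤ) + 2).natAbs = n + 2 := by omega
    have h1 : ((n : ℤ) + 1).natAbs = n + 1 := by omega
    rw [h2, h1]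
    push_cast
    ring_nf
  have hq : ∀ n : ℕ, ∃ m : ℤ, (D : ℚ) * (1 / 4 - (1 / 2) ^ (n + 2)) = m := by
    intro n
    have hv : (fun i => (c ((n : ℤ) + 2) i : ℤ) - c ((n : ℤ) + 1) i - c 2 i + c 1 i) ∈ S :=
      ⟨_, (hsum n).symm⟩
    obtain ⟨q, hq1, m, hm⟩ := key _ hv
    have hqe : q = 1 / 4 - (1 / 2 : ℚ) ^ (n + 2) := by
      have : (q : ℝ) = ((1 / 4 - (1 / 2 : ℚ) ^ (n + 2) : ℚ) : ℝ) := hq1.trans (hsum n)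
      exact_mod_cast this
    exact ⟨m, hqe ▸ hm⟩
  obtain ⟨m1, hm1⟩ := hq D
  obtain ⟨m2, hm2⟩ := hq (D + 1)
  have hdiff : (D : ℚ) * (1 / 2) ^ (D + 3) = ((m2 - m1 : ℤ) : ℚ) := by
    push_cast
    linear_combination hm2 - hm1
  have hposq : (0 : ℚ) < (D : ℚ) * (1 / 2) ^ (D + 3) := by positivity
  have hint : (1 : ℚ) ≤ ((m2 - m1 : ℤ) : ℚ) := by
    have h0 : (0 : ℤ) < m2 - m1 := by exact_mod_cast hdiff ▸ hposq
    exact_mod_cast h0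
  have hge : (2 : ℚ) ^ (D + 3) ≤ (D : ℚ) := by
    have h1 : (1 : ℚ) ≤ (D : ℚ) * (1 / 2) ^ (D + 3) := by rw [hdiff]; exact hint
    have key2 : ((1 : ℚ) / 2) ^ (D + 3) * 2 ^ (D + 3) = 1 := by
      rw [← mul_pow]; norm_num
    have h3 := mul_le_mul_of_nonneg_right h1 (le_of_lt (pow_pos two_pos (D + 3)))
    rw [one_mul, mul_assoc, key2, mul_one] at h3
    exact h3
  have hlt : (D : ℚ) < 2 ^ (D + 3) := by
    have : D < 2 ^ (D + 3) :=
      lt_of_lt_of_le (Nat.lt_two_pow_self (n := D)) (Nat.pow_le_pow_right (by norm_num) (by omega))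
    exact_mod_cast this
  linarith
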